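/- Let π and β be policies with β(a|z) > 0 for all (z,a), let ρ be an initial probability mass function on Z, and let Q̂ : Z × A → ℝ. Suppose |Q^β(z,a)| ≤ Q_max for all (z,a), |Q^β(z,a) − Q̂(z,a)| ≤ δ for all (z,a), and D_KL(π(·|z) ‖ β(·|z)) ≤ ε for all z ∈ Z. Define the estimated surrogate objectives Ĵ_β(π) = Σ_{z ∈ Z} d^β(z) · Σ_{a ∈ A} π(a|z) · Q̂(z,a) and Ĵ(β) = Σ_{z ∈ Z} d^β(z) · Σ_{a ∈ A} β(a|z) · Q̂(z,a). Then J(π) − J(β) ≥ (1/(1−γ)) · (Ĵ_β(π) − Ĵ(β)) − (2γ·Q_max/(1−γ)²) · ε − (2/(1−γ)) · δ. -/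

import Mathlib

open scoped BigOperators

/-- One application of the state transition matrix `P_μ` induced by policy `μpol`
to a distribution `ρ` over latent states: `(ρ P_μ)(z') = Σ_z ρ(z) Σ_a μ(a|z)·[F(z,a) = z']`. -/
noncomputable def stepDist {Z A : Type*} [Fintype Z] [Fintype A] [DecidableEq Z]
    (F : Z × A → Z) (μpol : Z → A → ℝ) (ρ : Z → ℝ) : Z → ℝ :=
  fun z' => ∑ z : Z, ρ z * ∑ a : A, μpol z a * (if F (z, a) = z' then (1 : ℝ) else 0)

/-- Discounted occupancy distribution `d^μ(z) = (1−γ) Σ_{t} γ^t (ρ P_μ^t)(z)`. -/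
noncomputable def occupancy {Z A : Type*} [Fintype Z] [Fintype A] [DecidableEq Z]
    (F : Z × A → Z) (γ : ℝ) (μpol : Z → A → ℝ) (ρ : Z → ℝ) : Z → ℝ :=
  fun z => (1 - γ) * ∑' t : ℕ, γ ^ t * ((stepDist F μpol)^[t] ρ) z

/-- Kullback–Leibler divergence between probability mass functions on a finite
type (with the convention `0 · log 0 = 0`, automatic since `Real.log 0 = 0`). -/
noncomputable def klFin {A : Type*} [Fintype A] (p q : A → ℝ) : ℝ :=
  ∑ a : A, p a * Real.log (p a / q a)

/-- backward (Bellman expectation) operator on functions -/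
def Tback {Z A : Type*} [Fintype A] (F : Z × A → Z) (μpol : Z → A → ℝ) (f : Z → ℝ) : Z → ℝ :=
  fun z => ∑ a : A, μpol z a * f (F (z, a))

section MDP

set_option linter.unusedSectionVars false

variable {Z A : Type*} [Fintype Z] [Fintype A] [DecidableEq Z]
variable (F : Z × A → Z) (μ : Z → A → ℝ)

lemma step_adjoint (ρ f : Z → ℝ) :
    ∑ z : Z, stepDist F μ ρ z * f z = ∑ z : Z, ρ z * Tback F μ f z := by
  unfold stepDist Tback
  simp only [Finset.sum_mul, Finset.mul_sum, mul_ite, mul_one, mul_zero, ite_mul, zero_mul]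
  rw [Finset.sum_comm]
  refine Finset.sum_congr rfl fun z _ => ?_
  rw [Finset.sum_comm]
  refine Finset.sum_congr rfl fun a _ => ?_
  simp [mul_assoc]

lemma iterate_adjoint (t : ℕ) (ρ f : Z → ℝ) :
    ∑ z : Z, ((stepDist F μ)^[t] ρ) z * f z = ∑ z : Z, ρ z * ((Tback F μ)^[t] f) z := by
  induction t generalizing f with
  | zero => simp
  | succ n ih =>
    rw [Function.iterate_succ_apply' (stepDist F μ), step_adjoint, ih (Tback F μ f),
      ← Function.iterate_succ_apply (Tback F μ)]

variable (hμ0 : ∀ z a, 0 ≤ μ z a) (hμ1 : ∀ z, ∑ a : A, μ z a = 1)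

include hμ0 hμ1 in
lemma Tback_bound {f : Z → ℝ} {c : ℝ} (hf : ∀ z, |f z| ≤ c) (t : ℕ) :
    ∀ z, |((Tback F μ)^[t] f) z| ≤ c := by
  induction t with
  | zero => simpa using hf
  | succ n ih =>
    intro z
    rw [Function.iterate_succ_apply' (Tback F μ)]
    calc |∑ a : A, μ z a * ((Tback F μ)^[n] f) (F (z, a))|
        ≤ ∑ a : A, |μ z a * ((Tback F μ)^[n] f) (F (z, a))| := Finset.abs_sum_le_sum_abs _ _
      _ ≤ ∑ a : A, μ z a * c := by
          apply Finset.sum_le_sum; intro a _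
          rw [abs_mul, abs_of_nonneg (hμ0 z a)]
          exact mul_le_mul_of_nonneg_left (ih (F (z, a))) (hμ0 z a)
      _ = c := by rw [← Finset.sum_mul, hμ1 z, one_mul]

include hμ0 hμ1 in
lemma Tback_one (t : ℕ) : ((Tback F μ)^[t] (fun _ => (1:ℝ))) = fun _ => (1:ℝ) := by
  induction t with
  | zero => rfl
  | succ n ih =>
    rw [Function.iterate_succ_apply (Tback F μ), show Tback F μ (fun _ => (1:ℝ)) = fun _ => (1:ℝ)
      from funext fun z => by simp [Tback, hμ1 z], ih]

include hμ0 in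
lemma step_iter_nonneg {ρ : Z → ℝ} (hρ0 : ∀ z, 0 ≤ ρ z) (t : ℕ) :
    ∀ z, 0 ≤ ((stepDist F μ)^[t] ρ) z := by
  induction t with
  | zero => simpa using hρ0
  | succ n ih =>
    intro z
    rw [Function.iterate_succ_apply' (stepDist F μ)]
    apply Finset.sum_nonneg; intro x _
    apply mul_nonneg (ih x)
    apply Finset.sum_nonneg; intro a _
    apply mul_nonneg (hμ0 x a)
    split <;> norm_num

include hμ0 hμ1 in
lemma step_iter_mass {ρ : Z → ℝ} (hρ1 : ∑ z : Z, ρ z = 1) (t : ℕ) :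
    ∑ z : Z, ((stepDist F μ)^[t] ρ) z = 1 := by
  have := iterate_adjoint F μ t ρ (fun _ => (1:ℝ))
  rw [Tback_one F μ hμ0 hμ1] at this
  simpa [hρ1] using this

include hμ0 hμ1 in
lemma step_iter_le_one {ρ : Z → ℝ} (hρ0 : ∀ z, 0 ≤ ρ z) (hρ1 : ∑ z : Z, ρ z = 1) (t : ℕ) (z : Z) :
    ((stepDist F μ)^[t] ρ) z ≤ 1 := by
  have h1 := step_iter_mass F μ hμ0 hμ1 hρ1 t
  have h0 := step_iter_nonneg F μ hμ0 hρ0 t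
  calc ((stepDist F μ)^[t] ρ) z ≤ ∑ z' : Z, ((stepDist F μ)^[t] ρ) z' :=
        Finset.single_le_sum (fun z' _ => h0 z') (Finset.mem_univ z)
    _ = 1 := h1

variable {γ : ℝ} (hγ0 : 0 < γ) (hγ1 : γ < 1)

include hμ0 hμ1 hγ0 hγ1 in
lemma occ_summable {ρ : Z → ℝ} (hρ0 : ∀ z, 0 ≤ ρ z) (hρ1 : ∑ z : Z, ρ z = 1)
    (f : Z → ℝ) (z : Z) :
    Summable (fun t : ℕ => γ ^ t * ((stepDist F μ)^[t] ρ) z * f z) := by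
  apply Summable.of_norm_bounded (g := fun t : ℕ => γ ^ t * |f z|)
    ((summable_geometric_of_lt_one hγ0.le hγ1).mul_right _)
  intro t
  rw [Real.norm_eq_abs, abs_mul, abs_mul, abs_of_nonneg (pow_nonneg hγ0.le t),
    abs_of_nonneg (step_iter_nonneg F μ hμ0 hρ0 t z)]
  apply mul_le_mul_of_nonneg_right _ (abs_nonneg _)
  nlinarith [step_iter_le_one F μ hμ0 hμ1 hρ0 hρ1 t z, pow_nonneg hγ0.le t]

include hμ0 hμ1 hγ0 hγ1 in
lemma occ_pair {ρ : Z → ℝ} (hρ0 : ∀ z, 0 ≤ ρ z) (hρ1 : ∑ z : Z, ρ z = 1) (f : Z → ℝ) :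
    ∑ z : Z, occupancy F γ μ ρ z * f z
      = (1 - γ) * ∑' t : ℕ, γ ^ t * ∑ z : Z, ρ z * ((Tback F μ)^[t] f) z := by
  unfold occupancy
  have h1 : ∀ z : Z, (1 - γ) * (∑' t : ℕ, γ ^ t * ((stepDist F μ)^[t] ρ) z) * f z
      = (1 - γ) * ∑' t : ℕ, γ ^ t * ((stepDist F μ)^[t] ρ) z * f z := by
    intro z
    rw [mul_assoc, ← tsum_mul_right]
  rw [Finset.sum_congr rfl fun z _ => h1 z, ← Finset.mul_sum]
  congr 1
  rw [← Summable.tsum_finsetSum (fun z _ => occ_summable F μ hμ0 hμ1 hγ0 hγ1 hρ0 hρ1 f z)]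
  congr 1; funext t
  rw [show (∑ i : Z, γ ^ t * (stepDist F μ)^[t] ρ i * f i)
      = γ ^ t * ∑ i : Z, (stepDist F μ)^[t] ρ i * f i from by
    rw [Finset.mul_sum]; exact Finset.sum_congr rfl fun i _ => by ring,
    iterate_adjoint F μ t ρ f, Finset.mul_sum]


lemma Tback_step_linear (f g : Z → ℝ) (c : ℝ) :
    Tback F μ (fun z => f z + c * g z) = fun z => Tback F μ f z + c * Tback F μ g z := by
  funext z
  simp only [Tback, mul_add, Finset.sum_add_distrib, Finset.mul_sum]
  congr 1
  exact Finset.sum_congr rfl fun a _ => by ring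

lemma Tback_linear (f g : Z → ℝ) (c : ℝ) (t : ℕ) :
    (Tback F μ)^[t] (fun z => f z + c * g z)
      = fun z => ((Tback F μ)^[t] f) z + c * ((Tback F μ)^[t] g) z := by
  induction t generalizing f g with
  | zero => rfl
  | succ n ih =>
    rw [Function.iterate_succ_apply, Tback_step_linear, ih,
      ← Function.iterate_succ_apply, ← Function.iterate_succ_apply]

omit [Fintype A] in
lemma pair_bound {ρ f : Z → ℝ} {c : ℝ} (hρ0 : ∀ z, 0 ≤ ρ z) (hρ1 : ∑ z : Z, ρ z = 1)
    (hf : ∀ z, |f z| ≤ c) : |∑ z : Z, ρ z * f z| ≤ c := by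
  calc |∑ z : Z, ρ z * f z| ≤ ∑ z : Z, |ρ z * f z| := Finset.abs_sum_le_sum_abs _ _
    _ ≤ ∑ z : Z, ρ z * c := by
        apply Finset.sum_le_sum; intro z _
        rw [abs_mul, abs_of_nonneg (hρ0 z)]
        exact mul_le_mul_of_nonneg_left (hf z) (hρ0 z)
    _ = c := by rw [← Finset.sum_mul, hρ1, one_mul]

include hμ0 hμ1 hγ0 hγ1 in
lemma neumann [Nonempty Z] {ρ : Z → ℝ} (hρ0 : ∀ z, 0 ≤ ρ z) (hρ1 : ∑ z : Z, ρ z = 1)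
    (D A' : Z → ℝ) (hD : ∀ z, D z = A' z + γ * Tback F μ D z) :
    ∑ z : Z, ρ z * D z = ∑' t : ℕ, γ ^ t * ∑ z : Z, ρ z * ((Tback F μ)^[t] A') z := by
  set s : ℕ → ℝ := fun t => γ ^ t * ∑ z : Z, ρ z * ((Tback F μ)^[t] A') z with hs
  have hDfun : D = fun z => A' z + γ * Tback F μ D z := funext hD
  have hpoint : ∀ n : ℕ, ∀ z, ((Tback F μ)^[n] D) z
      = ((Tback F μ)^[n] A') z + γ * ((Tback F μ)^[n+1] D) z := by
    intro n z
    conv_lhs => rw [hDfun]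
    rw [Tback_linear F μ A' (Tback F μ D) γ n, ← Function.iterate_succ_apply]
  have hpart : ∀ n : ℕ, ∑ z : Z, ρ z * D z
      = (∑ t ∈ Finset.range n, s t) + γ ^ n * ∑ z : Z, ρ z * ((Tback F μ)^[n] D) z := by
    intro n
    induction n with
    | zero => simp
    | succ n ih =>
      rw [ih, Finset.sum_range_succ]
      have hstep : ∑ z : Z, ρ z * ((Tback F μ)^[n] D) z
          = (∑ z : Z, ρ z * ((Tback F μ)^[n] A') z)
            + γ * ∑ z : Z, ρ z * ((Tback F μ)^[n+1] D) z := by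
        rw [Finset.mul_sum, ← Finset.sum_add_distrib]
        refine Finset.sum_congr rfl fun z _ => ?_
        rw [hpoint n z]; ring
      rw [hstep, hs]; ring
  set cD : ℝ := Finset.univ.sup' Finset.univ_nonempty (fun z => |D z|) with hcDdef
  have hcD : ∀ z, |D z| ≤ cD :=
    fun z => Finset.le_sup' (fun z => |D z|) (Finset.mem_univ z)
  set cA : ℝ := Finset.univ.sup' Finset.univ_nonempty (fun z => |A' z|) with hcAdef
  have hcA : ∀ z, |A' z| ≤ cA :=
    fun z => Finset.le_sup' (fun z => |A' z|) (Finset.mem_univ z)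
  have htail : Filter.Tendsto (fun n => γ ^ n * ∑ z : Z, ρ z * ((Tback F μ)^[n] D) z)
      Filter.atTop (nhds 0) := by
    apply squeeze_zero_norm (a := fun n => γ ^ n * cD)
    · intro n
      rw [Real.norm_eq_abs, abs_mul, abs_of_nonneg (pow_nonneg hγ0.le n)]
      exact mul_le_mul_of_nonneg_left
        (pair_bound hρ0 hρ1 (Tback_bound F μ hμ0 hμ1 hcD n)) (pow_nonneg hγ0.le n)
    · simpa using (tendsto_pow_atTop_nhds_zero_of_lt_one hγ0.le hγ1).mul_const cD
  have hsum : Summable s := by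
    apply Summable.of_norm_bounded (g := fun t : ℕ => γ ^ t * cA)
      ((summable_geometric_of_lt_one hγ0.le hγ1).mul_right _)
    intro t
    rw [hs, Real.norm_eq_abs, abs_mul, abs_of_nonneg (pow_nonneg hγ0.le t)]
    exact mul_le_mul_of_nonneg_left
      (pair_bound hρ0 hρ1 (Tback_bound F μ hμ0 hμ1 hcA t)) (pow_nonneg hγ0.le t)
  have h1 : Filter.Tendsto (fun n => ∑ t ∈ Finset.range n, s t) Filter.atTop (nhds (∑' t, s t)) :=
    hsum.hasSum.tendsto_sum_nat
  have h2 : Filter.Tendsto (fun n => ∑ t ∈ Finset.range n, s t) Filter.atTop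
      (nhds (∑ z : Z, ρ z * D z)) := by
    have heq : (fun n => ∑ t ∈ Finset.range n, s t)
        = fun n => (∑ z : Z, ρ z * D z) - γ ^ n * ∑ z : Z, ρ z * ((Tback F μ)^[n] D) z :=
      funext fun n => by rw [hpart n]; ring
    rw [heq]
    simpa using (tendsto_const_nhds.sub htail)
  exact tendsto_nhds_unique h2 h1

end MDP

/-- Padé-type bound for log. -/
lemma log_pade (t : ℝ) (ht : 0 < t) :
    (t ≤ 1 → Real.log t ≤ 2*(t-1)/(t+1)) ∧ (1 ≤ t → 2*(t-1)/(t+1) ≤ Real.log t) := by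
  set h : ℝ → ℝ := fun s => Real.log s - 2*(s-1)/(s+1) with hh
  have hder : ∀ s : ℝ, 0 < s → HasDerivAt h (1/s - 4/(s+1)^2) s := by
    intro s hs
    have h1 : HasDerivAt Real.log (1/s) s := by
      simpa [one_div] using Real.hasDerivAt_log (ne_of_gt hs)
    have hs1 : s + 1 ≠ 0 := by linarith
    have h2 : HasDerivAt (fun x : ℝ => 2*(x-1)/(x+1))
        ((2*(s+1) - 2*(s-1)*1)/(s+1)^2) s := by
      exact ((((hasDerivAt_id' s).sub_const 1).const_mul 2).div
        ((hasDerivAt_id' s).add_const 1) hs1).congr_deriv (by ring)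
    have := h1.sub h2
    refine this.congr_deriv (Eq.symm ?_)
    ring
  have hmono : MonotoneOn h (Set.Ioi 0) := by
    apply monotoneOn_of_deriv_nonneg (convex_Ioi 0)
    · intro s hs
      exact ((hder s hs).continuousAt).continuousWithinAt
    · intro s hs
      rw [interior_Ioi] at hs
      exact ((hder s hs).differentiableAt).differentiableWithinAt
    · intro s hs
      rw [interior_Ioi] at hs
      have hs' : (0:ℝ) < s := hs
      rw [(hder s hs').deriv]
      have hs1 : (0:ℝ) < s + 1 := by linarith
      rw [div_sub_div _ _ (ne_of_gt hs') (by positivity)]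
      apply div_nonneg (by nlinarith [sq_nonneg (s-1)]) (by positivity)
  have h1 : h 1 = 0 := by simp [hh]
  constructor
  · intro ht1
    have := hmono (Set.mem_Ioi.mpr ht) (Set.mem_Ioi.mpr one_pos) ht1
    rw [h1] at this
    simpa [hh, sub_nonpos] using this
  · intro ht1
    have := hmono (Set.mem_Ioi.mpr one_pos) (Set.mem_Ioi.mpr ht) ht1
    rw [h1] at this
    simpa [hh, sub_nonneg] using this

lemma g_nonneg (t : ℝ) (ht : 0 ≤ t) :
    0 ≤ t * Real.log t - t + 1 - 3*(t-1)^2/(2*(t+2)) := by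
  rcases eq_or_lt_of_le ht with h0 | ht
  · rw [← h0]; norm_num
  set g : ℝ → ℝ := fun s => s * Real.log s - s + 1 - 3*(s-1)^2/(2*(s+2)) with hg
  have hder : ∀ s : ℝ, 0 < s →
      HasDerivAt g (Real.log s - 3*((s-1)*(s+5))/(2*(s+2)^2)) s := by
    intro s hs
    have hs2 : 2*(s+2) ≠ 0 := by positivity
    have h1 : HasDerivAt (fun x : ℝ => x * Real.log x) (1 * Real.log s + s * (1/s)) s := by
      have := (hasDerivAt_id' s).mul (Real.hasDerivAt_log (ne_of_gt hs))
      exact this.congr_deriv (by rw [one_div])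
    have h2 : HasDerivAt (fun x : ℝ => 3*(x-1)^2/(2*(x+2)))
        ((3*(2*(s-1)^1*1)*(2*(s+2)) - 3*(s-1)^2*(2*1))/(2*(s+2))^2) s := by
      exact ((((hasDerivAt_id s).sub_const 1).pow 2).const_mul 3).div
        (((hasDerivAt_id s).add_const 2).const_mul 2) hs2
    have := (h1.sub (hasDerivAt_id s)).add_const 1 |>.sub h2
    refine this.congr_deriv (Eq.symm ?_)
    field_simp
    ring
  have key : ∀ s : ℝ, 0 < s → g 1 ≤ g s → 0 ≤ g s := by
    intro s _ h; simpa [hg] using h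
  have g1 : g 1 = 0 := by simp [hg]
  have hsign : ∀ s : ℝ, 0 < s → s ≤ 1 →
      deriv g s ≤ 0 := by
    intro s hs hs1
    rw [(hder s hs).deriv]
    have hlog := (log_pade s hs).1 hs1
    have hfrac : 2*(s-1)/(s+1) ≤ 3*((s-1)*(s+5))/(2*(s+2)^2) := by
      rw [div_le_div_iff₀ (by positivity) (by positivity)]
      nlinarith [sq_nonneg (s-1), sub_nonneg.mpr hs1]
    linarith
  have hsign' : ∀ s : ℝ, 1 ≤ s → 0 ≤ deriv g s := by
    intro s hs1
    have hs : (0:ℝ) < s := by linarith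
    rw [(hder s hs).deriv]
    have hlog := (log_pade s hs).2 hs1
    have hfrac : 3*((s-1)*(s+5))/(2*(s+2)^2) ≤ 2*(s-1)/(s+1) := by
      rw [div_le_div_iff₀ (by positivity) (by positivity)]
      nlinarith [sq_nonneg (s-1), sub_nonneg.mpr hs1]
    linarith
  rcases le_or_gt t 1 with h | h
  · have hanti : AntitoneOn g (Set.Ioc 0 1) := by
      apply antitoneOn_of_deriv_nonpos (convex_Ioc 0 1)
      · intro s hs
        exact ((hder s hs.1).continuousAt).continuousWithinAt
      · intro s hs
        rw [interior_Ioc] at hs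
        exact ((hder s hs.1).differentiableAt).differentiableWithinAt
      · intro s hs
        rw [interior_Ioc] at hs
        exact hsign s hs.1 hs.2.le
    have := hanti (Set.mem_Ioc.mpr ⟨ht, h⟩) (Set.mem_Ioc.mpr ⟨one_pos, le_refl 1⟩) h
    rw [g1] at this
    exact key t ht (by simpa [g1] using this)
  · have hmono : MonotoneOn g (Set.Ici 1) := by
      apply monotoneOn_of_deriv_nonneg (convex_Ici 1)
      · intro s hs
        exact ((hder s (by simp at hs; linarith)).continuousAt).continuousWithinAt
      · intro s hs
        rw [interior_Ici] at hs
        exact ((hder s (by simp at hs; linarith)).differentiableAt).differentiableWithinAt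
      · intro s hs
        rw [interior_Ici] at hs
        exact hsign' s hs.le
    have := hmono (Set.mem_Ici.mpr (le_refl 1)) (Set.mem_Ici.mpr h.le) h.le
    rw [g1] at this
    exact key t ht (by simpa [g1] using this)

/-- Scalar ingredient for Pinsker. -/
lemma scalar_pinsker (x y : ℝ) (hx : 0 ≤ x) (hy : 0 < y) :
    3/2 * (x-y)^2 / (x+2*y) ≤ x * Real.log (x/y) - x + y := by
  rcases eq_or_lt_of_le hx with h0 | hx
  · rw [← h0]
    simp
    rw [div_le_iff₀ (by positivity)]
    nlinarith
  have hg := g_nonneg (x/y) (by positivity)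
  set L := Real.log (x/y) with hL
  have key : x * L - x + y - 3/2 * (x-y)^2 / (x+2*y)
      = y * ((x/y) * L - (x/y) + 1 - 3*((x/y)-1)^2/(2*((x/y)+2))) := by
    have hy' : y ≠ 0 := ne_of_gt hy
    have hx2y : x + 2*y ≠ 0 := by positivity
    field_simp
  nlinarith [mul_nonneg hy.le hg]

/-- Pinsker's inequality, finite form. -/
lemma pinsker_fin {A : Type*} [Fintype A] (p q : A → ℝ)
    (hp0 : ∀ a, 0 ≤ p a) (hp1 : ∑ a : A, p a = 1)
    (hq0 : ∀ a, 0 < q a) (hq1 : ∑ a : A, q a = 1) :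
    (∑ a : A, |p a - q a|) ^ 2 ≤ 2 * klFin p q := by
  have hkl : klFin p q = ∑ a : A, (p a * Real.log (p a / q a) - p a + q a) := by
    simp [klFin, Finset.sum_add_distrib, Finset.sum_sub_distrib, hp1, hq1]
  have h1 : ∑ a : A, 3/2 * (p a - q a)^2 / (p a + 2*q a) ≤ klFin p q := by
    rw [hkl]
    exact Finset.sum_le_sum fun a _ => scalar_pinsker (p a) (q a) (hp0 a) (hq0 a)
  have h2 : (∑ a : A, |p a - q a|) ^ 2 / ∑ a : A, (p a + 2 * q a)
      ≤ ∑ a : A, |p a - q a| ^ 2 / (p a + 2 * q a) := by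
    exact Finset.sq_sum_div_le_sum_sq_div _ _ fun a _ => by
      have := hp0 a; have := hq0 a; positivity
  have h3 : ∑ a : A, (p a + 2 * q a) = 3 := by
    simp [Finset.sum_add_distrib, ← Finset.mul_sum, hp1, hq1]
    norm_num
  rw [h3] at h2
  have h4 : ∑ a : A, |p a - q a| ^ 2 / (p a + 2 * q a)
      = ∑ a : A, (p a - q a) ^ 2 / (p a + 2 * q a) := by
    simp [sq_abs]
  rw [h4] at h2
  have h5 : ∑ a : A, (p a - q a) ^ 2 / (p a + 2 * q a)
      = 2/3 * ∑ a : A, 3/2 * (p a - q a)^2 / (p a + 2*q a) := by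
    rw [Finset.mul_sum]; congr 1; ext a; ring
  rw [div_le_iff₀ (by norm_num : (0:ℝ) < 3)] at h2
  nlinarith

/-- policy improvement lower bound: with
`Ĵ_β(π) = Σ_z d^β(z) Σ_a π(a|z) Q̂(z,a)` and `Ĵ(β) = Σ_z d^β(z) Σ_a β(a|z) Q̂(z,a)`,
if `|Q^β| ≤ Q_max`, `|Q^β − Q̂| ≤ δ` and `D_KL(π(·|z)‖β(·|z)) ≤ ε` for all `z`, then
`J(π) − J(β) ≥ (1/(1−γ))·(Ĵ_β(π) − Ĵ(β)) − (2γ Q_max/(1−γ)²)·ε − (2/(1−γ))·δ`.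
Here `Q^β(z,a) = R(z,a) + γ·V^β(F(z,a))` and `Vπ, Vβ` are characterized by their
Bellman fixed-point equations, and `J(μ) = Σ_z ρ(z)·V^μ(z)`. -/
theorem policy_improvement_lower_bound
    {Z A : Type*} [Fintype Z] [Fintype A] [Nonempty Z] [Nonempty A] [DecidableEq Z]
    (F : Z × A → Z) (R : Z × A → ℝ) (γ : ℝ) (hγ0 : 0 < γ) (hγ1 : γ < 1)
    (π β : Z → A → ℝ)
    (hπ0 : ∀ z a, 0 ≤ π z a) (hπ1 : ∀ z, ∑ a : A, π z a = 1)
    (hβ0 : ∀ z a, 0 < β z a) (hβ1 : ∀ z, ∑ a : A, β z a = 1)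
    (ρ : Z → ℝ) (hρ0 : ∀ z, 0 ≤ ρ z) (hρ1 : ∑ z : Z, ρ z = 1)
    (Vπ Vβ : Z → ℝ)
    (hVπ : ∀ z, Vπ z = ∑ a : A, π z a * (R (z, a) + γ * Vπ (F (z, a))))
    (hVβ : ∀ z, Vβ z = ∑ a : A, β z a * (R (z, a) + γ * Vβ (F (z, a))))
    (Qhat : Z × A → ℝ) (Qmax δ ε : ℝ)
    (hQmax : ∀ z a, |R (z, a) + γ * Vβ (F (z, a))| ≤ Qmax)
    (hQhat : ∀ z a, |(R (z, a) + γ * Vβ (F (z, a))) - Qhat (z, a)| ≤ δ)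
    (hKL : ∀ z, klFin (π z) (β z) ≤ ε) :
    (∑ z : Z, ρ z * Vπ z) - (∑ z : Z, ρ z * Vβ z) ≥
      (1 / (1 - γ)) *
          ((∑ z : Z, occupancy F γ β ρ z * ∑ a : A, π z a * Qhat (z, a)) -
            (∑ z : Z, occupancy F γ β ρ z * ∑ a : A, β z a * Qhat (z, a)))
        - (2 * γ * Qmax / (1 - γ) ^ 2) * ε - (2 / (1 - γ)) * δ := by
  classical
  have h1γ : (0:ℝ) < 1 - γ := by linarith
  have hβ0' : ∀ z a, 0 ≤ β z a := fun z a => (hβ0 z a).le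
  set D : Z → ℝ := fun z => Vπ z - Vβ z with hDdef
  set Aadv : Z → ℝ :=
    fun z => (∑ a : A, π z a * (R (z, a) + γ * Vβ (F (z, a)))) - Vβ z with hAadvdef
  set A' : Z → ℝ := fun z => Aadv z + γ * (Tback F π D z - Tback F β D z) with hA'def
  clear_value A' Aadv D
  -- Bellman recursion for D under π
  have hDA : ∀ z, D z = Aadv z + γ * Tback F π D z := by
    intro z
    simp only [hDdef, hAadvdef, Tback]
    rw [hVπ z]
    rw [Finset.sum_congr rfl fun a _ =>
      show π z a * (R (z, a) + γ * Vπ (F (z, a)))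
          = π z a * (R (z, a) + γ * Vβ (F (z, a)))
            + γ * (π z a * (Vπ (F (z, a)) - Vβ (F (z, a)))) from by ring]
    rw [Finset.sum_add_distrib, ← Finset.mul_sum]
    ring
  -- Bellman recursion for D under β with modified reward A'
  have hD : ∀ z, D z = A' z + γ * Tback F β D z := by
    intro z; rw [hDA z, hA'def]; ring
  -- main identity
  have hmain : ∑ z : Z, occupancy F γ β ρ z * A' z = (1 - γ) * ∑ z : Z, ρ z * D z := by
    rw [occ_pair F β hβ0' hβ1 hγ0 hγ1 hρ0 hρ1 A',
      neumann F β hβ0' hβ1 hγ0 hγ1 hρ0 hρ1 D A' hD]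
  -- Pinsker consequences
  have hε0 : (0:ℝ) ≤ ε := by
    obtain ⟨z₀⟩ := ‹Nonempty Z›
    have h1 := pinsker_fin (π z₀) (β z₀) (hπ0 z₀) (hπ1 z₀) (hβ0 z₀) (hβ1 z₀)
    have h2 := hKL z₀
    nlinarith [sq_nonneg (∑ a : A, |π z₀ a - β z₀ a|)]
  set L : ℝ := Real.sqrt (2*ε) with hLdef
  have hL0 : 0 ≤ L := Real.sqrt_nonneg _
  have hL2 : L^2 = 2*ε := Real.sq_sqrt (by linarith)
  have hTV : ∀ z, ∑ a : A, |π z a - β z a| ≤ L := by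
    intro z
    have h1 := pinsker_fin (π z) (β z) (hπ0 z) (hπ1 z) (hβ0 z) (hβ1 z)
    have h2 := hKL z
    have hnn : 0 ≤ ∑ a : A, |π z a - β z a| := Finset.sum_nonneg fun a _ => abs_nonneg _
    nlinarith
  have hTV2 : ∀ z, ∑ a : A, |π z a - β z a| ≤ 2 := by
    intro z
    calc ∑ a : A, |π z a - β z a| ≤ ∑ a : A, (π z a + β z a) := by
          apply Finset.sum_le_sum; intro a _
          have := abs_sub_abs_le_abs_sub (π z a) (β z a)
          rw [abs_of_nonneg (hπ0 z a), abs_of_nonneg (hβ0' z a)] at *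
          exact (abs_sub (π z a) (β z a)).trans_eq (by
            rw [abs_of_nonneg (hπ0 z a), abs_of_nonneg (hβ0' z a)])
      _ = 2 := by rw [Finset.sum_add_distrib, hπ1 z, hβ1 z]; norm_num
  have hQm0 : 0 ≤ Qmax := by
    obtain ⟨z₀⟩ := ‹Nonempty Z›; obtain ⟨a₀⟩ := ‹Nonempty A›
    exact (abs_nonneg _).trans (hQmax z₀ a₀)
  have hδ0 : 0 ≤ δ := by
    obtain ⟨z₀⟩ := ‹Nonempty Z›; obtain ⟨a₀⟩ := ‹Nonempty A›
    exact (abs_nonneg _).trans (hQhat z₀ a₀)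
  -- advantage rewritten as a difference
  have hAadv_eq : ∀ z, Aadv z = ∑ a : A, (π z a - β z a) * (R (z, a) + γ * Vβ (F (z, a))) := by
    intro z
    simp only [hAadvdef]
    rw [hVβ z, ← Finset.sum_sub_distrib]
    exact Finset.sum_congr rfl fun a _ => by ring
  have hAadv_bd : ∀ z, |Aadv z| ≤ Qmax * L := by
    intro z
    rw [hAadv_eq z]
    calc |∑ a : A, (π z a - β z a) * (R (z, a) + γ * Vβ (F (z, a)))|
        ≤ ∑ a : A, |(π z a - β z a) * (R (z, a) + γ * Vβ (F (z, a)))| :=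
          Finset.abs_sum_le_sum_abs _ _
      _ ≤ ∑ a : A, |π z a - β z a| * Qmax := by
          apply Finset.sum_le_sum; intro a _
          rw [abs_mul]
          exact mul_le_mul_of_nonneg_left (hQmax z a) (abs_nonneg _)
      _ = (∑ a : A, |π z a - β z a|) * Qmax := by rw [Finset.sum_mul]
      _ ≤ L * Qmax := mul_le_mul_of_nonneg_right (hTV z) hQm0
      _ = Qmax * L := mul_comm _ _
  -- sup-norm bound on D
  set cD : ℝ := Finset.univ.sup' Finset.univ_nonempty (fun z => |D z|) with hcDdef
  have hcD : ∀ z, |D z| ≤ cD := fun z => Finset.le_sup' (fun z => |D z|) (Finset.mem_univ z)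
  have hcD_le : cD ≤ Qmax * L / (1 - γ) := by
    obtain ⟨zs, _, hzs⟩ := Finset.exists_mem_eq_sup' Finset.univ_nonempty (fun z => |D z|)
    have hT : |Tback F π D zs| ≤ cD := by
      have := Tback_bound F π hπ0 hπ1 hcD 1 zs
      rwa [Function.iterate_one] at this
    have h1 : |D zs| ≤ Qmax * L + γ * cD := by
      rw [hDA zs]
      calc |Aadv zs + γ * Tback F π D zs| ≤ |Aadv zs| + |γ * Tback F π D zs| := abs_add_le _ _
        _ ≤ Qmax * L + γ * cD := by
            rw [abs_mul, abs_of_nonneg hγ0.le]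
            exact add_le_add (hAadv_bd zs) (mul_le_mul_of_nonneg_left hT hγ0.le)
    rw [le_div_iff₀ h1γ]
    have : cD = |D zs| := hzs
    nlinarith
  have hDbd : ∀ z, |D z| ≤ Qmax * L / (1 - γ) := fun z => (hcD z).trans hcD_le
  -- per-state lower bound on A'
  have hA'lb : ∀ z, (∑ a : A, π z a * Qhat (z, a)) - (∑ a : A, β z a * Qhat (z, a))
      - 2*δ - 2*γ*Qmax*ε/(1-γ) ≤ A' z := by
    intro z
    have hpart1 : |Aadv z - ((∑ a : A, π z a * Qhat (z, a)) - (∑ a : A, β z a * Qhat (z, a)))|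
        ≤ 2*δ := by
      have heq : Aadv z - ((∑ a : A, π z a * Qhat (z, a)) - (∑ a : A, β z a * Qhat (z, a)))
          = ∑ a : A, (π z a - β z a) * ((R (z, a) + γ * Vβ (F (z, a))) - Qhat (z, a)) := by
        rw [hAadv_eq z, ← Finset.sum_sub_distrib, ← Finset.sum_sub_distrib]
        exact Finset.sum_congr rfl fun a _ => by ring
      rw [heq]
      calc |∑ a : A, (π z a - β z a) * ((R (z, a) + γ * Vβ (F (z, a))) - Qhat (z, a))|
          ≤ ∑ a : A, |(π z a - β z a) * ((R (z, a) + γ * Vβ (F (z, a))) - Qhat (z, a))| :=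
            Finset.abs_sum_le_sum_abs _ _
        _ ≤ ∑ a : A, |π z a - β z a| * δ := by
            apply Finset.sum_le_sum; intro a _
            rw [abs_mul]
            exact mul_le_mul_of_nonneg_left (hQhat z a) (abs_nonneg _)
        _ = (∑ a : A, |π z a - β z a|) * δ := by rw [Finset.sum_mul]
        _ ≤ 2*δ := mul_le_mul_of_nonneg_right (hTV2 z) hδ0
    have hpart2 : |Tback F π D z - Tback F β D z| ≤ L * (Qmax * L / (1 - γ)) := by
      have heq : Tback F π D z - Tback F β D z
          = ∑ a : A, (π z a - β z a) * D (F (z, a)) := by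
        simp only [Tback]
        rw [← Finset.sum_sub_distrib]
        exact Finset.sum_congr rfl fun a _ => by ring
      rw [heq]
      calc |∑ a : A, (π z a - β z a) * D (F (z, a))|
          ≤ ∑ a : A, |(π z a - β z a) * D (F (z, a))| := Finset.abs_sum_le_sum_abs _ _
        _ ≤ ∑ a : A, |π z a - β z a| * (Qmax * L / (1 - γ)) := by
            apply Finset.sum_le_sum; intro a _
            rw [abs_mul]
            exact mul_le_mul_of_nonneg_left (hDbd (F (z, a))) (abs_nonneg _)
        _ = (∑ a : A, |π z a - β z a|) * (Qmax * L / (1 - γ)) := by rw [Finset.sum_mul]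
        _ ≤ L * (Qmax * L / (1 - γ)) := by
            apply mul_le_mul_of_nonneg_right (hTV z)
            positivity
    have hL2' : L * (Qmax * L / (1 - γ)) = 2*Qmax*ε/(1-γ) := by
      field_simp
      nlinarith [hL2]
    rw [hL2'] at hpart2
    have h1 := abs_le.mp hpart1
    have h2 := abs_le.mp hpart2
    simp only [hA'def]
    have h3 := mul_le_mul_of_nonneg_left h2.1 hγ0.le
    have heq : γ * -(2 * Qmax * ε / (1 - γ)) = -(2 * γ * Qmax * ε / (1 - γ)) := by ring
    have h4 : -(2 * γ * Qmax * ε / (1 - γ)) ≤ γ * (Tback F π D z - Tback F β D z) :=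
      heq ▸ h3
    linarith [h1.1, h4]
  -- occupancy is a probability distribution
  have hocc0 : ∀ z, 0 ≤ occupancy F γ β ρ z := by
    intro z
    apply mul_nonneg h1γ.le
    apply tsum_nonneg
    intro t
    exact mul_nonneg (pow_nonneg hγ0.le t) (step_iter_nonneg F β hβ0' hρ0 t z)
  have hocc1 : ∑ z : Z, occupancy F γ β ρ z = 1 := by
    have := occ_pair F β hβ0' hβ1 hγ0 hγ1 hρ0 hρ1 (fun _ => (1:ℝ))
    simp only [mul_one] at this
    rw [this]
    have h2 : ∀ t : ℕ, γ ^ t * ∑ z : Z, ρ z * ((Tback F β)^[t] (fun _ => (1:ℝ))) z = γ ^ t := by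
      intro t
      rw [Tback_one F β hβ0' hβ1 t]
      simp [hρ1]
    rw [tsum_congr h2, tsum_geometric_of_lt_one hγ0.le hγ1]
    field_simp
  -- lower bound the occupancy-weighted surrogate
  set c : ℝ := 2*δ + 2*γ*Qmax*ε/(1-γ) with hcdef
  have hsum_lb : (∑ z : Z, occupancy F γ β ρ z * ∑ a : A, π z a * Qhat (z, a))
      - (∑ z : Z, occupancy F γ β ρ z * ∑ a : A, β z a * Qhat (z, a)) - c
      ≤ ∑ z : Z, occupancy F γ β ρ z * A' z := by
    have h1 : ∑ z : Z, occupancy F γ β ρ z *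
        ((∑ a : A, π z a * Qhat (z, a)) - (∑ a : A, β z a * Qhat (z, a)) - c)
        ≤ ∑ z : Z, occupancy F γ β ρ z * A' z := by
      apply Finset.sum_le_sum; intro z _
      apply mul_le_mul_of_nonneg_left _ (hocc0 z)
      have := hA'lb z
      rw [hcdef]; linarith
    calc (∑ z : Z, occupancy F γ β ρ z * ∑ a : A, π z a * Qhat (z, a))
          - (∑ z : Z, occupancy F γ β ρ z * ∑ a : A, β z a * Qhat (z, a)) - c
        = ∑ z : Z, occupancy F γ β ρ z *
            ((∑ a : A, π z a * Qhat (z, a)) - (∑ a : A, β z a * Qhat (z, a)) - c) := by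
          rw [Finset.sum_congr rfl fun z _ =>
            show occupancy F γ β ρ z *
              ((∑ a : A, π z a * Qhat (z, a)) - (∑ a : A, β z a * Qhat (z, a)) - c)
              = occupancy F γ β ρ z * (∑ a : A, π z a * Qhat (z, a))
                - occupancy F γ β ρ z * (∑ a : A, β z a * Qhat (z, a))
                - occupancy F γ β ρ z * c from by ring]
          rw [Finset.sum_sub_distrib, Finset.sum_sub_distrib, ← Finset.sum_mul, hocc1, one_mul]
      _ ≤ ∑ z : Z, occupancy F γ β ρ z * A' z := h1
  -- put everything together
  have hJD : (∑ z : Z, ρ z * Vπ z) - (∑ z : Z, ρ z * Vβ z) = ∑ z : Z, ρ z * D z := by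
    rw [← Finset.sum_sub_distrib]
    exact Finset.sum_congr rfl fun z _ => by simp only [hDdef]; ring
  rw [ge_iff_le, hJD]
  have hkey : ∑ z : Z, ρ z * D z = (1/(1-γ)) * ∑ z : Z, occupancy F γ β ρ z * A' z := by
    rw [hmain]
    field_simp
  rw [hkey]
  set X : ℝ := (∑ z : Z, occupancy F γ β ρ z * ∑ a : A, π z a * Qhat (z, a))
      - (∑ z : Z, occupancy F γ β ρ z * ∑ a : A, β z a * Qhat (z, a)) with hXdef
  have hfinal : (1/(1-γ)) * (X - c) ≤ (1/(1-γ)) * ∑ z : Z, occupancy F γ β ρ z * A' z := by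
    apply mul_le_mul_of_nonneg_left _ (by positivity)
    rw [hXdef]
    linarith [hsum_lb]
  refine le_trans (le_of_eq ?_) hfinal
  rw [hcdef]
  field_simp
  ring
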